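/- Let $(N_p)_{p>0}$ be a family of Poisson random variables with $\mathbb{E}[N_p]=p$. Then for any $\gamma>0$, $p^{\gamma}\,\mathbb{E}[N_p^{-\gamma}\mathbf{1}(N_p>0)] \to 1$ as $p\to\infty$. -/

import Mathlib

open scoped NNReal
open Filter ProbabilityTheory Real


lemma hasSum_exp_mul_poisson (p : ℝ≥0) (t : ℝ) :
    HasSum (fun n : ℕ => Real.exp (t * n) * poissonPMFReal p n)
      (Real.exp ((p : ℝ) * Real.exp t - p)) := by
  have h := NormedSpace.expSeries_div_hasSum_exp ((p : ℝ) * Real.exp t)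
  rw [← Real.exp_eq_exp_ℝ] at h
  have h2 := h.mul_left (Real.exp (-(p : ℝ)))
  have : Real.exp (-(p:ℝ)) * Real.exp ((p:ℝ) * Real.exp t) = Real.exp ((p:ℝ) * Real.exp t - p) := by
    rw [← Real.exp_add]; ring_nf
  rw [this] at h2
  convert h2 using 2 with n
  · rfl
  unfold poissonPMFReal
  rw [mul_pow, ← Real.exp_nat_mul]
  ring_nf

lemma summable_poisson (p : ℝ≥0) : Summable (poissonPMFReal p) :=
  (poissonPMFRealSum p).summable

lemma chernoff_le (p : ℝ≥0) (a t : ℝ) (ht : t ≤ 0) :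
    (∑' n : ℕ, if (n : ℝ) ≤ a then poissonPMFReal p n else 0) ≤
      Real.exp ((p : ℝ) * Real.exp t - p - t * a) := by
  have hg : HasSum (fun n : ℕ => Real.exp (-(t*a)) * (Real.exp (t * n) * poissonPMFReal p n))
      (Real.exp (-(t*a)) * Real.exp ((p : ℝ) * Real.exp t - p)) :=
    (hasSum_exp_mul_poisson p t).mul_left _
  have hval : Real.exp (-(t*a)) * Real.exp ((p : ℝ) * Real.exp t - p)
      = Real.exp ((p : ℝ) * Real.exp t - p - t * a) := by
    rw [← Real.exp_add]; ring_nf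
  have hpt : ∀ n : ℕ, (if (n : ℝ) ≤ a then poissonPMFReal p n else 0) ≤
      Real.exp (-(t*a)) * (Real.exp (t * n) * poissonPMFReal p n) := by
    intro n
    have hpm : 0 ≤ poissonPMFReal p n := poissonPMFReal_nonneg
    by_cases h : (n : ℝ) ≤ a
    · simp only [h, if_true]
      have : Real.exp (-(t*a)) * Real.exp (t * n) = Real.exp (t * (n - a)) := by
        rw [← Real.exp_add]; ring_nf
      rw [← mul_assoc, this]
      have h1 : (1:ℝ) ≤ Real.exp (t * (n - a)) := by
        rw [← Real.exp_zero]
        apply Real.exp_le_exp.mpr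
        nlinarith
      nlinarith
    · simp only [h, if_false]
      positivity
  have hsf : Summable (fun n : ℕ => if (n : ℝ) ≤ a then poissonPMFReal p n else 0) := by
    apply Summable.of_nonneg_of_le _ _ (summable_poisson p)
    · intro n; by_cases h : (n:ℝ) ≤ a <;> simp [h, poissonPMFReal_nonneg]
    · intro n; by_cases h : (n:ℝ) ≤ a <;> simp [h, poissonPMFReal_nonneg]
  calc (∑' n : ℕ, if (n : ℝ) ≤ a then poissonPMFReal p n else 0)
      ≤ ∑' n : ℕ, Real.exp (-(t*a)) * (Real.exp (t * n) * poissonPMFReal p n) :=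
        Summable.tsum_le_tsum hpt hsf hg.summable
    _ = Real.exp ((p : ℝ) * Real.exp t - p - t * a) := by rw [hg.tsum_eq, hval]

lemma chernoff_ge (p : ℝ≥0) (a t : ℝ) (ht : 0 ≤ t) :
    (∑' n : ℕ, if a ≤ (n : ℝ) then poissonPMFReal p n else 0) ≤
      Real.exp ((p : ℝ) * Real.exp t - p - t * a) := by
  have hg : HasSum (fun n : ℕ => Real.exp (-(t*a)) * (Real.exp (t * n) * poissonPMFReal p n))
      (Real.exp (-(t*a)) * Real.exp ((p : ℝ) * Real.exp t - p)) :=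
    (hasSum_exp_mul_poisson p t).mul_left _
  have hval : Real.exp (-(t*a)) * Real.exp ((p : ℝ) * Real.exp t - p)
      = Real.exp ((p : ℝ) * Real.exp t - p - t * a) := by
    rw [← Real.exp_add]; ring_nf
  have hpt : ∀ n : ℕ, (if a ≤ (n : ℝ) then poissonPMFReal p n else 0) ≤
      Real.exp (-(t*a)) * (Real.exp (t * n) * poissonPMFReal p n) := by
    intro n
    have hpm : 0 ≤ poissonPMFReal p n := poissonPMFReal_nonneg
    by_cases h : a ≤ (n : ℝ)
    · simp only [h, if_true]
      have : Real.exp (-(t*a)) * Real.exp (t * n) = Real.exp (t * (n - a)) := by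
        rw [← Real.exp_add]; ring_nf
      rw [← mul_assoc, this]
      have h1 : (1:ℝ) ≤ Real.exp (t * (n - a)) := by
        rw [← Real.exp_zero]
        apply Real.exp_le_exp.mpr
        nlinarith
      nlinarith
    · simp only [h, if_false]
      positivity
  have hsf : Summable (fun n : ℕ => if a ≤ (n : ℝ) then poissonPMFReal p n else 0) := by
    apply Summable.of_nonneg_of_le _ _ (summable_poisson p)
    · intro n; by_cases h : a ≤ (n:ℝ) <;> simp [h, poissonPMFReal_nonneg]
    · intro n; by_cases h : a ≤ (n:ℝ) <;> simp [h, poissonPMFReal_nonneg]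
  calc (∑' n : ℕ, if a ≤ (n : ℝ) then poissonPMFReal p n else 0)
      ≤ ∑' n : ℕ, Real.exp (-(t*a)) * (Real.exp (t * n) * poissonPMFReal p n) :=
        Summable.tsum_le_tsum hpt hsf hg.summable
    _ = Real.exp ((p : ℝ) * Real.exp t - p - t * a) := by rw [hg.tsum_eq, hval]

lemma tail_low_bound' {ε : ℝ} (hε0 : 0 < ε) (hε1 : ε < 1) :
    ∃ c > 0, ∀ p : ℝ≥0,
      (∑' n : ℕ, if (n : ℝ) ≤ (1 - ε) * p then poissonPMFReal p n else 0) ≤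
        Real.exp (-(c * p)) := by
  have h1ε : (0:ℝ) < 1 - ε := by linarith
  refine ⟨ε + (1 - ε) * Real.log (1 - ε), ?_, ?_⟩
  · have hlog := Real.log_lt_sub_one_of_pos (x := (1-ε)⁻¹) (by positivity)
      (by intro h; rw [inv_eq_one] at h; linarith)
    rw [Real.log_inv] at hlog
    have hinv : (1 - ε) * (1 - ε)⁻¹ = 1 := mul_inv_cancel₀ (ne_of_gt h1ε)
    nlinarith
  · intro p
    have := chernoff_le p ((1 - ε) * p) (Real.log (1 - ε)) (Real.log_nonpos (by linarith) (by linarith))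
    rw [Real.exp_log h1ε] at this
    calc (∑' n : ℕ, if (n : ℝ) ≤ (1 - ε) * p then poissonPMFReal p n else 0)
        ≤ Real.exp ((p:ℝ) * (1 - ε) - p - Real.log (1-ε) * ((1-ε)*p)) := this
      _ = Real.exp (-((ε + (1 - ε) * Real.log (1 - ε)) * p)) := by ring_nf

lemma tail_up_bound' {ε : ℝ} (hε0 : 0 < ε) :
    ∃ c > 0, ∀ p : ℝ≥0,
      (∑' n : ℕ, if (1 + ε) * (p : ℝ) ≤ n then poissonPMFReal p n else 0) ≤
        Real.exp (-(c * p)) := by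
  have h1ε : (0:ℝ) < 1 + ε := by linarith
  refine ⟨(1 + ε) * Real.log (1 + ε) - ε, ?_, ?_⟩
  · have hlog := Real.log_lt_sub_one_of_pos (x := (1+ε)⁻¹) (by positivity)
      (by intro h; rw [inv_eq_one] at h; linarith)
    rw [Real.log_inv] at hlog
    have hinv : (1 + ε) * (1 + ε)⁻¹ = 1 := mul_inv_cancel₀ (ne_of_gt h1ε)
    nlinarith
  · intro p
    have := chernoff_ge p ((1 + ε) * p) (Real.log (1 + ε)) (Real.log_nonneg (by linarith))
    rw [Real.exp_log h1ε] at this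
    calc (∑' n : ℕ, if (1 + ε) * (p:ℝ) ≤ n then poissonPMFReal p n else 0)
        ≤ Real.exp ((p:ℝ) * (1 + ε) - p - Real.log (1+ε) * ((1+ε)*p)) := this
      _ = Real.exp (-(((1 + ε) * Real.log (1 + ε) - ε) * p)) := by ring_nf

theorem poisson_negative_moment_asymptotics (γ : ℝ) (hγ : 0 < γ) :
    Tendsto
      (fun p : ℝ≥0 =>
        (p : ℝ) ^ γ *
          ∑' n : ℕ, (if 0 < n then (n : ℝ) ^ (-γ) else 0) * poissonPMFReal p n)
      atTop (nhds 1) := by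
  have hcoe : Tendsto (fun p : ℝ≥0 => (p : ℝ)) atTop atTop :=
    NNReal.tendsto_coe_atTop.mpr tendsto_id
  set w : ℕ → ℝ := fun n => if 0 < n then (n : ℝ) ^ (-γ) else 0 with hwdef
  have hw0 : ∀ n, 0 ≤ w n := by
    intro n; by_cases h : 0 < n <;> simp [w, h] <;> positivity
  have hw1 : ∀ n, w n ≤ 1 := by
    intro n; by_cases h : 0 < n <;> simp [w, h]
    exact Real.rpow_le_one_of_one_le_of_nonpos (by exact_mod_cast h) (by linarith)
  have hsummable : ∀ p : ℝ≥0, Summable (fun n => w n * poissonPMFReal p n) := by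
    intro p
    refine Summable.of_nonneg_of_le (fun n => mul_nonneg (hw0 n) poissonPMFReal_nonneg)
      (fun n => ?_) (summable_poisson p)
    calc w n * poissonPMFReal p n ≤ 1 * poissonPMFReal p n :=
          mul_le_mul_of_nonneg_right (hw1 n) poissonPMFReal_nonneg
      _ = poissonPMFReal p n := one_mul _
  rw [tendsto_order]
  constructor
  · -- lower bound
    intro c hc
    set b : ℝ := (max c 0 + 1) / 2 with hbdef
    have hb0 : 0 < b := by
      have : (0:ℝ) ≤ max c 0 := le_max_right _ _
      rw [hbdef]; linarith
    have hb1 : b < 1 := by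
      have : max c 0 < 1 := max_lt hc one_pos
      rw [hbdef]; linarith
    have hcb : c < b := by
      have h1 : c ≤ max c 0 := le_max_left _ _
      have h2 : max c 0 < b := by
        have : max c 0 < 1 := max_lt hc one_pos
        rw [hbdef]; linarith
      linarith
    set ε : ℝ := b ^ (-1 / γ) - 1 with hεdef
    have hε0 : 0 < ε := by
      have : 1 < b ^ (-1/γ) :=
        Real.one_lt_rpow_of_pos_of_lt_one_of_neg hb0 hb1 (by
          rw [neg_div]; exact neg_neg_of_pos (by positivity))
      rw [hεdef]; linarith
    have h1ε : (1:ℝ) + ε = b ^ (-1 / γ) := by rw [hεdef]; ring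
    have hbe : ((1:ℝ) + ε) ^ (-γ) = b := by
      rw [h1ε, ← Real.rpow_mul hb0.le]
      have : -1 / γ * -γ = 1 := by field_simp
      rw [this, Real.rpow_one]
    obtain ⟨c₂, hc₂, htail⟩ := tail_up_bound' hε0
    -- limits
    have hpmf0 : Tendsto (fun p : ℝ≥0 => poissonPMFReal p 0) atTop (nhds 0) := by
      have : (fun p : ℝ≥0 => poissonPMFReal p 0) = fun p : ℝ≥0 => Real.exp (-(p:ℝ)) := by
        funext p; simp [poissonPMFReal]
      rw [this]
      exact Real.tendsto_exp_atBot.comp (tendsto_neg_atBot_iff.mpr hcoe)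
    have hexp : Tendsto (fun p : ℝ≥0 => Real.exp (-(c₂ * (p:ℝ)))) atTop (nhds 0) := by
      apply Real.tendsto_exp_atBot.comp
      apply tendsto_neg_atBot_iff.mpr
      exact (tendsto_const_mul_atTop_of_pos hc₂).mpr hcoe
    have htail0 : Tendsto
        (fun p : ℝ≥0 => ∑' n : ℕ, if (1 + ε) * (p : ℝ) ≤ n then poissonPMFReal p n else 0)
        atTop (nhds 0) := by
      apply squeeze_zero (fun p => tsum_nonneg fun n => by
        by_cases h : (1+ε)*(p:ℝ) ≤ n <;> simp [h, poissonPMFReal_nonneg]) (fun p => htail p) hexp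
    have hM : Tendsto (fun p : ℝ≥0 => b * (1 - poissonPMFReal p 0 -
        ∑' n : ℕ, if (1 + ε) * (p : ℝ) ≤ n then poissonPMFReal p n else 0)) atTop (nhds b) := by
      have h1 : Tendsto (fun p : ℝ≥0 => 1 - poissonPMFReal p 0 -
          ∑' n : ℕ, if (1 + ε) * (p : ℝ) ≤ n then poissonPMFReal p n else 0) atTop (nhds 1) := by
        have := (tendsto_const_nhds (x := (1:ℝ)) (f := atTop (α := ℝ≥0))).sub hpmf0 |>.sub htail0
        simpa using this
      have := h1.const_mul b
      simpa using this
    have hev1 := hM.eventually (lt_mem_nhds hcb)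
    have hev2 := hcoe.eventually_ge_atTop 1
    filter_upwards [hev1, hev2] with p hp1 hp2
    set x : ℝ := (p : ℝ) with hxdef
    have hx0 : 0 < x := lt_of_lt_of_le one_pos hp2
    have hax : 0 < (1 + ε) * x := by positivity
    -- mid sum
    set mid : ℕ → ℝ := fun n => if 0 < n ∧ (n : ℝ) ≤ (1 + ε) * x then poissonPMFReal p n else 0
      with hmiddef
    have hmid_nonneg : ∀ n, 0 ≤ mid n := by
      intro n
      by_cases h : 0 < n ∧ (n : ℝ) ≤ (1 + ε) * x
      · simp only [hmiddef]; rw [if_pos h]; exact poissonPMFReal_nonneg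
      · simp only [hmiddef]; rw [if_neg h]
    have hsmid : Summable mid := by
      refine Summable.of_nonneg_of_le hmid_nonneg (fun n => ?_) (summable_poisson p)
      by_cases h : 0 < n ∧ (n : ℝ) ≤ (1 + ε) * x
      · simp only [hmiddef]; rw [if_pos h]
      · simp only [hmiddef]; rw [if_neg h]; exact poissonPMFReal_nonneg
    set z : ℕ → ℝ := fun n => (if n = 0 then poissonPMFReal p 0 else 0) +
      (if (1 + ε) * x ≤ n then poissonPMFReal p n else 0) with hzdef
    have hsz1 : Summable (fun n : ℕ => if n = 0 then poissonPMFReal p 0 else 0) :=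
      (hasSum_ite_eq 0 (poissonPMFReal p 0)).summable
    have hsz2 : Summable (fun n : ℕ => if (1 + ε) * x ≤ n then poissonPMFReal p n else 0) := by
      apply Summable.of_nonneg_of_le _ _ (summable_poisson p) <;>
        (intro n; by_cases h : (1 + ε) * x ≤ (n:ℝ) <;> simp [h, poissonPMFReal_nonneg])
    have hsz : Summable z := hsz1.add hsz2
    have hzval : ∑' n, z n = poissonPMFReal p 0 +
        ∑' n : ℕ, if (1 + ε) * x ≤ n then poissonPMFReal p n else 0 := by
      rw [hzdef, Summable.tsum_add hsz1 hsz2, (hasSum_ite_eq 0 (poissonPMFReal p 0)).tsum_eq]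
    have hstep1 : 1 - poissonPMFReal p 0 -
        (∑' n : ℕ, if (1 + ε) * x ≤ n then poissonPMFReal p n else 0) ≤ ∑' n, mid n := by
      have hpt : ∀ n, poissonPMFReal p n - z n ≤ mid n := by
        intro n
        have hzn : z n = (if n = 0 then poissonPMFReal p 0 else 0) +
            (if (1 + ε) * x ≤ (n : ℝ) then poissonPMFReal p n else 0) := rfl
        rcases Nat.eq_zero_or_pos n with hn | hn
        · subst hn
          have h0 : ¬ ((1 + ε) * x ≤ ((0:ℕ) : ℝ)) := by push_cast; nlinarith
          have hm : mid 0 = 0 := by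
            simp only [hmiddef]; rw [if_neg]; rintro ⟨h, -⟩; exact lt_irrefl 0 h
          rw [hm, hzn, if_pos rfl, if_neg h0]
          simp
        · by_cases h : ((n : ℕ) : ℝ) ≤ (1 + ε) * x
          · have hm : mid n = poissonPMFReal p n := by
              simp only [hmiddef]; rw [if_pos ⟨hn, h⟩]
            rw [hm, hzn, if_neg (Nat.pos_iff_ne_zero.mp hn)]
            have hnn : 0 ≤ (if (1 + ε) * x ≤ (n : ℝ) then poissonPMFReal p n else 0) := by
              split
              · exact poissonPMFReal_nonneg
              · exact le_refl 0
            linarith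
          · have h2 : (1 + ε) * x ≤ (n : ℝ) := (not_le.mp h).le
            have hm : mid n = 0 := by
              simp only [hmiddef]; rw [if_neg]; rintro ⟨-, hh⟩; exact h hh
            rw [hm, hzn, if_neg (Nat.pos_iff_ne_zero.mp hn), if_pos h2]
            simp
      have := Summable.tsum_le_tsum hpt ((summable_poisson p).sub hsz) hsmid
      rw [Summable.tsum_sub (summable_poisson p) hsz, (show HasSum (poissonPMFReal p) 1 from poissonPMFRealSum p).tsum_eq, hzval] at this
      linarith
    have hstep2 : ((1 + ε) * x) ^ (-γ) * (∑' n, mid n) ≤ ∑' n, w n * poissonPMFReal p n := by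
      rw [← tsum_mul_left]
      apply Summable.tsum_le_tsum _ (hsmid.mul_left _) (hsummable p)
      intro n
      by_cases h : 0 < n ∧ (n : ℝ) ≤ (1 + ε) * x
      · have hmn : mid n = poissonPMFReal p n := by simp [mid, h]
        have hwn : w n = (n : ℝ) ^ (-γ) := by simp [w, h.1]
        rw [hmn, hwn]
        apply mul_le_mul_of_nonneg_right _ poissonPMFReal_nonneg
        exact Real.rpow_le_rpow_of_nonpos (by exact_mod_cast h.1) h.2 (by linarith)
      · have hmn : mid n = 0 := by simp [mid, h]
        rw [hmn, mul_zero]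
        exact mul_nonneg (hw0 n) poissonPMFReal_nonneg
    have hkey : x ^ γ * ((1 + ε) * x) ^ (-γ) = b := by
      rw [Real.mul_rpow (by positivity) hx0.le, hbe]
      have hxx : x ^ γ * (x ^ (-γ)) = 1 := by
        rw [← Real.rpow_add hx0]; simp
      calc x ^ γ * (b * x ^ (-γ)) = b * (x ^ γ * x ^ (-γ)) := by ring
        _ = b := by rw [hxx, mul_one]
    calc c < b * (1 - poissonPMFReal p 0 -
            ∑' n : ℕ, if (1 + ε) * x ≤ n then poissonPMFReal p n else 0) := hp1
      _ ≤ b * (∑' n, mid n) := by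
          apply mul_le_mul_of_nonneg_left hstep1 hb0.le
      _ = x ^ γ * (((1 + ε) * x) ^ (-γ) * (∑' n, mid n)) := by
          rw [← mul_assoc, hkey]
      _ ≤ x ^ γ * ∑' n, w n * poissonPMFReal p n := by
          apply mul_le_mul_of_nonneg_left hstep2 (Real.rpow_nonneg hx0.le γ)
  · -- upper bound
    intro c hc
    set b : ℝ := (1 + c) / 2 with hbdef
    have hb1 : 1 < b := by rw [hbdef]; linarith
    have hbc : b < c := by rw [hbdef]; linarith
    have hb0 : 0 < b := by linarith
    set ε : ℝ := 1 - b ^ (-1 / γ) with hεdef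
    have hrp0 : 0 < b ^ (-1/γ) := Real.rpow_pos_of_pos hb0 _
    have hrp1 : b ^ (-1/γ) < 1 :=
      Real.rpow_lt_one_of_one_lt_of_neg hb1 (by rw [neg_div]; exact neg_neg_of_pos (by positivity))
    have hε0 : 0 < ε := by rw [hεdef]; linarith
    have hε1 : ε < 1 := by rw [hεdef]; linarith
    have h1ε : (1:ℝ) - ε = b ^ (-1 / γ) := by rw [hεdef]; ring
    have h1ε0 : (0:ℝ) < 1 - ε := by linarith
    have hbe : ((1:ℝ) - ε) ^ (-γ) = b := by
      rw [h1ε, ← Real.rpow_mul hb0.le]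
      have : -1 / γ * -γ = 1 := by field_simp
      rw [this, Real.rpow_one]
    obtain ⟨c₁, hc₁, htail⟩ := tail_low_bound' hε0 hε1
    have hzero : Tendsto (fun p : ℝ≥0 => (p:ℝ) ^ γ * Real.exp (-(c₁ * (p:ℝ)))) atTop (nhds 0) := by
      have := (tendsto_rpow_mul_exp_neg_mul_atTop_nhds_zero γ c₁ hc₁).comp hcoe
      simpa [Function.comp_def, neg_mul] using this
    have hev1 := hzero.eventually (gt_mem_nhds (show (0:ℝ) < c - b by linarith))
    have hev2 := hcoe.eventually_ge_atTop 1
    filter_upwards [hev1, hev2] with p hp1 hp2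
    set x : ℝ := (p : ℝ) with hxdef
    have hx0 : 0 < x := lt_of_lt_of_le one_pos hp2
    have hax : 0 < (1 - ε) * x := by positivity
    set g : ℕ → ℝ := fun n => (if (n : ℝ) ≤ (1 - ε) * x then poissonPMFReal p n else 0) +
      ((1 - ε) * x) ^ (-γ) * poissonPMFReal p n with hgdef
    have hsg1 : Summable (fun n : ℕ => if (n : ℝ) ≤ (1 - ε) * x then poissonPMFReal p n else 0) := by
      apply Summable.of_nonneg_of_le _ _ (summable_poisson p) <;>
        (intro n; by_cases h : (n:ℝ) ≤ (1 - ε) * x <;> simp [h, poissonPMFReal_nonneg])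
    have hsg2 : Summable (fun n : ℕ => ((1 - ε) * x) ^ (-γ) * poissonPMFReal p n) :=
      (summable_poisson p).mul_left _
    have hpt : ∀ n, w n * poissonPMFReal p n ≤ g n := by
      intro n
      have hpm : 0 ≤ poissonPMFReal p n := poissonPMFReal_nonneg
      have hterm2 : 0 ≤ ((1 - ε) * x) ^ (-γ) * poissonPMFReal p n :=
        mul_nonneg (Real.rpow_nonneg hax.le _) hpm
      by_cases h : (n : ℝ) ≤ (1 - ε) * x
      · have : g n = poissonPMFReal p n + ((1 - ε) * x) ^ (-γ) * poissonPMFReal p n := by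
          simp [g, h]
        rw [this]
        nlinarith [hw1 n, hw0 n]
      · have hng : g n = ((1 - ε) * x) ^ (-γ) * poissonPMFReal p n := by simp [g, h]
        have hlt : (1 - ε) * x < (n : ℝ) := not_le.mp h
        have hnpos : 0 < n := by
          have : (0:ℝ) < (n:ℝ) := lt_trans hax hlt
          exact_mod_cast this
        have hwn : w n = (n : ℝ) ^ (-γ) := by simp [w, hnpos]
        rw [hng, hwn]
        apply mul_le_mul_of_nonneg_right _ poissonPMFReal_nonneg
        exact Real.rpow_le_rpow_of_nonpos hax hlt.le (by linarith)
    have hgval : ∑' n, g n = (∑' n : ℕ, if (n : ℝ) ≤ (1 - ε) * x then poissonPMFReal p n else 0)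
        + ((1 - ε) * x) ^ (-γ) := by
      rw [hgdef, Summable.tsum_add hsg1 hsg2, tsum_mul_left, (show HasSum (poissonPMFReal p) 1 from poissonPMFRealSum p).tsum_eq, mul_one]
    have hTle : (∑' n, w n * poissonPMFReal p n) ≤
        (∑' n : ℕ, if (n : ℝ) ≤ (1 - ε) * x then poissonPMFReal p n else 0)
        + ((1 - ε) * x) ^ (-γ) := by
      rw [← hgval]
      exact Summable.tsum_le_tsum hpt (hsummable p) (hsg1.add hsg2)
    have hkey : x ^ γ * ((1 - ε) * x) ^ (-γ) = b := by
      rw [Real.mul_rpow h1ε0.le hx0.le, hbe]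
      have hxx : x ^ γ * (x ^ (-γ)) = 1 := by
        rw [← Real.rpow_add hx0]; simp
      calc x ^ γ * (b * x ^ (-γ)) = b * (x ^ γ * x ^ (-γ)) := by ring
        _ = b := by rw [hxx, mul_one]
    have hxγ : (0:ℝ) ≤ x ^ γ := Real.rpow_nonneg hx0.le γ
    calc x ^ γ * ∑' n, w n * poissonPMFReal p n
        ≤ x ^ γ * ((∑' n : ℕ, if (n : ℝ) ≤ (1 - ε) * x then poissonPMFReal p n else 0)
            + ((1 - ε) * x) ^ (-γ)) := mul_le_mul_of_nonneg_left hTle hxγ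
      _ = x ^ γ * (∑' n : ℕ, if (n : ℝ) ≤ (1 - ε) * x then poissonPMFReal p n else 0) + b := by
          rw [mul_add, hkey]
      _ ≤ x ^ γ * Real.exp (-(c₁ * x)) + b := by
          have := htail p
          nlinarith [hxγ]
      _ < (c - b) + b := by linarith
      _ = c := by ring
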